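/- Let p > 1 and μ > 0 be real numbers and let g : ℝ → ℂ be a measurable function. Then, with both integrals taken in [0,∞], ∫_ℝ (μ² |ξ|³ / (1 + (μξ)²))² |g(ξ)|² dξ ≤ (max(μ^{p−1}, μ^{−1}))² · ∫_ℝ (1 + ξ²)^p |g(ξ)|² dξ. (Applied to g = φ̂, the Fourier transform of φ, this is the error estimate ‖φ′ − R₁(φ′)‖_{L²(ℝ)} ≤ max(μ^{p−1}, μ^{−1}) ‖φ‖_{H^p(ℝ)} for the Tikhonov regularization R₁(φ′)(t) = (2π)^{−1/2} ∫ iξ/(1+(μξ)²) φ̂(ξ) e^{iξt} dξ, via Plancherel's theorem.) -/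

import Mathlib

open MeasureTheory

/-- Error estimate for the Tikhonov regularization `R₁` of numerical differentiation
(in Fourier variables, via Plancherel): for `p > 1`, `μ > 0` and measurable `g : ℝ → ℂ`,
with both integrals taken in `[0,∞]`,
`∫ (μ²|ξ|³/(1+(μξ)²))² |g(ξ)|² dξ ≤ (max (μ^(p-1)) μ⁻¹)² ∫ (1+ξ²)^p |g(ξ)|² dξ`. -/
theorem tikhonov_error_estimate
    (p μ : ℝ) (hp : 1 < p) (hμ : 0 < μ) (g : ℝ → ℂ) (hg : Measurable g) :
    ∫⁻ ξ : ℝ, ENNReal.ofReal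
        ((μ ^ 2 * |ξ| ^ 3 / (1 + (μ * ξ) ^ 2)) ^ 2 * ‖g ξ‖ ^ 2)
      ≤ ENNReal.ofReal ((max (μ ^ (p - 1)) μ⁻¹) ^ 2) *
        ∫⁻ ξ : ℝ, ENNReal.ofReal ((1 + ξ ^ 2) ^ p * ‖g ξ‖ ^ 2) := by
  have hmax : (1 : ℝ) ≤ max (μ ^ (p - 1)) μ⁻¹ := by
    rcases le_or_gt 1 μ with h | h
    · exact le_max_of_le_left (Real.one_le_rpow h (by linarith))
    · exact le_max_of_le_right (by rw [le_inv_comm₀ one_pos hμ]; simpa using h.le)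
  have step1 : ∫⁻ ξ : ℝ, ENNReal.ofReal
        ((μ ^ 2 * |ξ| ^ 3 / (1 + (μ * ξ) ^ 2)) ^ 2 * ‖g ξ‖ ^ 2)
      ≤ ∫⁻ ξ : ℝ, ENNReal.ofReal ((1 + ξ ^ 2) ^ p * ‖g ξ‖ ^ 2) := by
    refine lintegral_mono fun ξ => ENNReal.ofReal_le_ofReal ?_
    have hd : (0:ℝ) < 1 + (μ * ξ) ^ 2 := by positivity
    have h1 : μ ^ 2 * |ξ| ^ 3 / (1 + (μ * ξ) ^ 2) ≤ |ξ| := by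
      rw [div_le_iff₀ hd, show |ξ| ^ 3 = ξ ^ 2 * |ξ| from by rw [pow_succ, sq_abs], mul_pow]
      nlinarith [abs_nonneg ξ]
    have h2 : (μ ^ 2 * |ξ| ^ 3 / (1 + (μ * ξ) ^ 2)) ^ 2 ≤ (1 + ξ ^ 2) ^ p := by
      calc (μ ^ 2 * |ξ| ^ 3 / (1 + (μ * ξ) ^ 2)) ^ 2 ≤ |ξ| ^ 2 :=
            pow_le_pow_left₀ (by positivity) h1 2
        _ = ξ ^ 2 := sq_abs ξ
        _ ≤ 1 + ξ ^ 2 := by linarith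
        _ = (1 + ξ ^ 2) ^ (1:ℝ) := (Real.rpow_one _).symm
        _ ≤ (1 + ξ ^ 2) ^ p :=
            Real.rpow_le_rpow_of_exponent_le (by nlinarith [sq_nonneg ξ]) hp.le
    exact mul_le_mul_of_nonneg_right h2 (by positivity)
  calc _ ≤ ∫⁻ ξ : ℝ, ENNReal.ofReal ((1 + ξ ^ 2) ^ p * ‖g ξ‖ ^ 2) := step1
    _ ≤ _ := by
        refine le_mul_of_one_le_left zero_le ?_
        exact ENNReal.one_le_ofReal.mpr (one_le_pow₀ hmax)
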